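/- arXiv:2012.13008 — 6 statements merged into one kernel-verified Lean document; each statement's English description precedes it below -/
import Mathlib

section
/- Let m > 0, E ∈ ℝ with |E| < m, and v > 0. Let f : ℝ → ℝ be continuous, non-positive, and not identically zero on [0,∞). Let φ : ℝ → ℝ be a twice continuously differentiable even function with φ(x) > 0 for all x ≥ 0, satisfying the Klein–Gordon equation φ''(x) = [m² − (E − v f(x))²] φ(x) for all x ≥ 0, normalized so that ∫₀^∞ φ(x)² dx = 1/2, with φ(x)φ'(x) → 0 as x → ∞, φ'(0) = 0, and such that the functions (φ')², f φ², and f² φ² are integrable on (0,∞). Then E ∫₀^∞ f(x) φ(x)² dx < v ∫₀^∞ f(x)² φ(x)² dx. -/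
open MeasureTheory Filter Set
open scoped Topology

/-- for a normalized even positive solution of the one-dimensional
Klein--Gordon equation `φ'' = (m² − (E − v f)²) φ` with `|E| < m`, one has
`E ∫₀^∞ f φ² < v ∫₀^∞ f² φ²`. -/
theorem kleinGordon_coupling_inequality
    (m E v : ℝ) (hm : 0 < m) (hE : |E| < m) (hv : 0 < v)
    (f : ℝ → ℝ) (hf_cont : Continuous f)
    (hf_nonpos : ∀ x ≥ (0:ℝ), f x ≤ 0)
    (hf_ne : ∃ x ≥ (0:ℝ), f x ≠ 0)
    (φ : ℝ → ℝ) (hφ_smooth : ContDiff ℝ 2 φ)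
    (hφ_even : ∀ x, φ (-x) = φ x)
    (hφ_pos : ∀ x ≥ (0:ℝ), 0 < φ x)
    (hKG : ∀ x ≥ (0:ℝ), deriv (deriv φ) x = (m ^ 2 - (E - v * f x) ^ 2) * φ x)
    (hnorm : ∫ x in Ioi (0:ℝ), φ x ^ 2 = 1 / 2)
    (hlim : Tendsto (fun x => φ x * deriv φ x) atTop (𝓝 0))
    (hφ'0 : deriv φ 0 = 0)
    (hint1 : IntegrableOn (fun x => (deriv φ x) ^ 2) (Ioi 0))
    (hint2 : IntegrableOn (fun x => f x * φ x ^ 2) (Ioi 0))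
    (hint3 : IntegrableOn (fun x => f x ^ 2 * φ x ^ 2) (Ioi 0)) :
    E * ∫ x in Ioi (0:ℝ), f x * φ x ^ 2 < v * ∫ x in Ioi (0:ℝ), f x ^ 2 * φ x ^ 2 := by
  have hφ_diff : Differentiable ℝ φ := hφ_smooth.differentiable (by norm_num)
  have hφ'_contdiff : ContDiff ℝ 1 (deriv φ) := by
    have := (contDiff_succ_iff_deriv (n := 1)).mp (by exact_mod_cast hφ_smooth)
    exact this.2.2
  have hφ'_diff : Differentiable ℝ (deriv φ) :=
    hφ'_contdiff.differentiable (by norm_num)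
  -- integrability of φ²
  have hiφ2 : IntegrableOn (fun x => φ x ^ 2) (Ioi 0) := by
    by_contra h
    rw [integral_undef h] at hnorm
    norm_num at hnorm
  -- pointwise identity on Ioi 0
  have key : ∀ x ∈ Ioi (0:ℝ), φ x * deriv (deriv φ) x
      = (m ^ 2 - E ^ 2) * φ x ^ 2 + (2 * E * v) * (f x * φ x ^ 2)
        - v ^ 2 * (f x ^ 2 * φ x ^ 2) := by
    intro x hx
    rw [hKG x (le_of_lt hx)]
    ring
  have hi4 : IntegrableOn (fun x => φ x * deriv (deriv φ) x) (Ioi 0) := by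
    apply IntegrableOn.congr_fun
      (((hiφ2.const_mul _).add (hint2.const_mul _)).sub (hint3.const_mul _))
      (fun x hx => (key x hx).symm) measurableSet_Ioi
  -- integration by parts
  have hIBP : ∫ x in Ioi (0:ℝ), (deriv φ x ^ 2 + φ x * deriv (deriv φ) x)
      = 0 - φ 0 * deriv φ 0 := by
    apply integral_Ioi_of_hasDerivAt_of_tendsto
      ((hφ_diff.continuous.mul hφ'_diff.continuous).continuousWithinAt)
      (fun x _ => ?_) (hint1.add hi4) hlim
    have := (hφ_diff x).hasDerivAt.mul (hφ'_diff x).hasDerivAt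
    simpa [sq, mul_comm] using this
  rw [hφ'0, mul_zero, sub_zero] at hIBP
  have hsplit : ∫ x in Ioi (0:ℝ), (deriv φ x ^ 2 + φ x * deriv (deriv φ) x)
      = (∫ x in Ioi (0:ℝ), deriv φ x ^ 2) + ∫ x in Ioi (0:ℝ), φ x * deriv (deriv φ) x :=
    integral_add hint1 hi4
  -- compute ∫ φ φ''
  have hcongr : ∫ x in Ioi (0:ℝ), φ x * deriv (deriv φ) x
      = (m ^ 2 - E ^ 2) * (1 / 2) + (2 * E * v) * (∫ x in Ioi (0:ℝ), f x * φ x ^ 2)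
        - v ^ 2 * (∫ x in Ioi (0:ℝ), f x ^ 2 * φ x ^ 2) := by
    have hadd : IntegrableOn
        (fun x => (m ^ 2 - E ^ 2) * φ x ^ 2 + (2 * E * v) * (f x * φ x ^ 2)) (Ioi 0) :=
      (hiφ2.const_mul _).add (hint2.const_mul _)
    rw [setIntegral_congr_fun measurableSet_Ioi key,
      integral_sub hadd (hint3.const_mul _),
      integral_add (hiφ2.const_mul _) (hint2.const_mul _),
      integral_const_mul, integral_const_mul, integral_const_mul, hnorm]
  have hA : (0:ℝ) ≤ ∫ x in Ioi (0:ℝ), deriv φ x ^ 2 :=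
    setIntegral_nonneg measurableSet_Ioi (fun x _ => sq_nonneg _)
  have hI3 : (0:ℝ) ≤ ∫ x in Ioi (0:ℝ), f x ^ 2 * φ x ^ 2 :=
    setIntegral_nonneg measurableSet_Ioi (fun x _ => mul_nonneg (sq_nonneg _) (sq_nonneg _))
  have hE2 : E ^ 2 < m ^ 2 := by
    have := abs_nonneg E
    nlinarith [sq_abs E]
  rw [hsplit, hcongr] at hIBP
  nlinarith [mul_nonneg (mul_nonneg hv.le hv.le) hI3, mul_nonneg hv.le hI3]
end

section
/- Let m > 0, E ∈ ℝ with |E| < m, and v > 0. Let f : ℝ → ℝ be continuous, even, non-positive, monotone non-decreasing on [0,∞), with f(x) → 0 as x → ∞. Let φ : ℝ → ℝ be a twice continuously differentiable even function with φ(x) > 0 for all x ≥ 0, φ'(0) = 0, φ(x) → 0 as x → ∞, satisfying the Klein–Gordon equation φ''(x) = [m² − (E − v f(x))²] φ(x) for all x ≥ 0, and such that v f(x) ≤ E for all x ≥ 0. Then φ'(x) ≤ 0 for all x ∈ [0,∞), i.e., φ is non-increasing on [0,∞). -/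
open MeasureTheory Filter Set
open scoped Topology

/-- the even, positive ground state of the one-dimensional Klein--Gordon
equation `φ'' = (m² − (E − v f)²) φ` is non-increasing on `[0, ∞)`. -/
theorem kleinGordon_groundState_monotone
    (m E v : ℝ) (hm : 0 < m) (hE : |E| < m) (hv : 0 < v)
    (f : ℝ → ℝ) (hf_cont : Continuous f)
    (hf_even : ∀ x, f (-x) = f x)
    (hf_nonpos : ∀ x, f x ≤ 0)
    (hf_mono : MonotoneOn f (Ici 0))
    (hf_lim : Tendsto f atTop (𝓝 0))
    (φ : ℝ → ℝ) (hφ_smooth : ContDiff ℝ 2 φ)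
    (hφ_even : ∀ x, φ (-x) = φ x)
    (hφ_pos : ∀ x ≥ (0:ℝ), 0 < φ x)
    (hφ'0 : deriv φ 0 = 0)
    (hφ_lim : Tendsto φ atTop (𝓝 0))
    (hKG : ∀ x ≥ (0:ℝ), deriv (deriv φ) x = (m ^ 2 - (E - v * f x) ^ 2) * φ x)
    (hfE : ∀ x ≥ (0:ℝ), v * f x ≤ E) :
    ∀ x ≥ (0:ℝ), deriv φ x ≤ 0 := by
  -- regularity of φ and φ'
  rw [show (2 : WithTop ℕ∞) = 1 + 1 from rfl] at hφ_smooth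
  obtain ⟨hφdiff, -, h1⟩ := contDiff_succ_iff_deriv.mp hφ_smooth
  have hφ'diff : Differentiable ℝ (deriv φ) := h1.differentiable one_ne_zero
  -- monotonicity of W x = m² - (E - v f x)²
  have hW_mono : ∀ x y : ℝ, 0 ≤ x → x ≤ y →
      m ^ 2 - (E - v * f x) ^ 2 ≤ m ^ 2 - (E - v * f y) ^ 2 := by
    intro x y hx hxy
    have hfxy : f x ≤ f y := hf_mono hx (le_trans hx hxy) hxy
    have hgy : 0 ≤ E - v * f y := sub_nonneg.mpr (hfE y (le_trans hx hxy))
    have hgle : E - v * f y ≤ E - v * f x := by nlinarith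
    nlinarith [sq_nonneg (E - v * f y)]
  intro x₀ hx₀
  by_contra hpos
  push_neg at hpos
  rcases lt_or_ge (m ^ 2 - (E - v * f x₀) ^ 2) 0 with hWneg | hWpos
  · -- W(x₀) < 0 : φ'' ≤ 0 on [0, x₀], so φ'(x₀) ≤ φ'(0) = 0
    have hanti : AntitoneOn (deriv φ) (Icc 0 x₀) := by
      apply antitoneOn_of_deriv_nonpos (convex_Icc 0 x₀)
        hφ'diff.continuous.continuousOn hφ'diff.differentiableOn
      intro x hx
      rw [interior_Icc] at hx
      have hx0 : (0:ℝ) ≤ x := le_of_lt hx.1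
      rw [hKG x hx0]
      have hWle : m ^ 2 - (E - v * f x) ^ 2 ≤ 0 :=
        le_of_lt (lt_of_le_of_lt (hW_mono x x₀ hx0 (le_of_lt hx.2)) hWneg)
      exact mul_nonpos_of_nonpos_of_nonneg hWle (le_of_lt (hφ_pos x hx0))
    have := hanti (left_mem_Icc.mpr hx₀) (right_mem_Icc.mpr hx₀) hx₀
    rw [hφ'0] at this
    linarith
  · -- W(x₀) ≥ 0 : φ' nondecreasing on [x₀, ∞), so φ' ≥ φ'(x₀) > 0 there,
    -- hence φ nondecreasing on [x₀, ∞), contradicting φ → 0.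
    have hmono' : MonotoneOn (deriv φ) (Ici x₀) := by
      apply monotoneOn_of_deriv_nonneg (convex_Ici x₀)
        hφ'diff.continuous.continuousOn hφ'diff.differentiableOn
      intro x hx
      rw [interior_Ici] at hx
      have hx0 : (0:ℝ) ≤ x := le_trans hx₀ (le_of_lt hx)
      rw [hKG x hx0]
      have hWge : 0 ≤ m ^ 2 - (E - v * f x) ^ 2 :=
        le_trans hWpos (hW_mono x₀ x hx₀ (le_of_lt hx))
      exact mul_nonneg hWge (le_of_lt (hφ_pos x hx0))
    have hφmono : MonotoneOn φ (Ici x₀) := by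
      apply monotoneOn_of_deriv_nonneg (convex_Ici x₀)
        hφdiff.continuous.continuousOn hφdiff.differentiableOn
      intro x hx
      rw [interior_Ici] at hx
      have := hmono' (self_mem_Ici) (le_of_lt hx : x₀ ≤ x) (le_of_lt hx)
      linarith
    have hev : ∀ᶠ x in atTop, φ x < φ x₀ :=
      hφ_lim.eventually (gt_mem_nhds (hφ_pos x₀ hx₀))
    obtain ⟨x, hxlt, hxge⟩ := (hev.and (eventually_ge_atTop x₀)).exists
    have := hφmono (self_mem_Ici) hxge hxge
    linarith
end

section
/- Let d ≥ 2 be an integer, m > 0, E ∈ ℝ with |E| < m, and v > 0. Let f belong to class P_d. Let R : (0,∞) → ℝ be a twice continuously differentiable, strictly positive function satisfying the radial Klein–Gordon equation with angular momentum l = 0, namely R''(r) + ((d−1)/r) R'(r) = [m² − (E − v f(r))²] R(r) for all r > 0, with r^{d−1} R'(r) → 0 as r → 0⁺, R(r) → 0 as r → ∞, and such that v f(r) ≤ E for all r > 0. Then R'(r) ≤ 0 for all r ∈ (0,∞), i.e., R is non-increasing on (0,∞). -/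
open MeasureTheory Filter Set
open scoped Topology

/-- A radial potential shape of class `P_d` (`d ≥ 2`): continuous on `(0, ∞)`,
non-positive, not identically zero, monotone non-decreasing, no more singular than
`r^{-(d-2)}` at the origin (i.e. `r^{d-2} f(r) → A` with `-∞ < A ≤ 0`), and vanishing
at infinity. -/
structure IsClassPd (d : ℕ) (f : ℝ → ℝ) : Prop where
  cont : ContinuousOn f (Ioi 0)
  nonpos : ∀ r > (0:ℝ), f r ≤ 0
  ne_zero : ∃ r > (0:ℝ), f r ≠ 0
  mono : MonotoneOn f (Ioi 0)
  singularity : ∃ A ≤ (0:ℝ),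
    Tendsto (fun r : ℝ => r ^ (d - 2) * f r) (𝓝[>] 0) (𝓝 A)
  lim_top : Tendsto f atTop (𝓝 0)

/-- the strictly positive radial ground state (`l = 0`) of the
`d`-dimensional Klein--Gordon equation
`R'' + ((d−1)/r) R' = (m² − (E − v f)²) R` is non-increasing on `(0, ∞)`. -/
theorem kleinGordon_radial_groundState_monotone
    (d : ℕ) (hd : 2 ≤ d) (m E v : ℝ) (hm : 0 < m) (hE : |E| < m) (hv : 0 < v)
    (f : ℝ → ℝ) (hf : IsClassPd d f)
    (R : ℝ → ℝ)
    (hR1 : ∀ r > (0:ℝ), DifferentiableAt ℝ R r)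
    (hR2 : ∀ r > (0:ℝ), DifferentiableAt ℝ (deriv R) r)
    (hR2c : ContinuousOn (deriv (deriv R)) (Ioi 0))
    (hRpos : ∀ r > (0:ℝ), 0 < R r)
    (heqn : ∀ r > (0:ℝ), deriv (deriv R) r + (((d:ℝ) - 1) / r) * deriv R r
        = (m ^ 2 - (E - v * f r) ^ 2) * R r)
    (hbc0 : Tendsto (fun r : ℝ => r ^ (d - 1) * deriv R r) (𝓝[>] 0) (𝓝 0))
    (hbcInf : Tendsto R atTop (𝓝 0))
    (hfE : ∀ r > (0:ℝ), v * f r ≤ E) :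
    ∀ r > (0:ℝ), deriv R r ≤ 0 := by
  obtain ⟨p, rfl⟩ : ∃ p, d = p + 2 := ⟨d - 2, by omega⟩
  intro s hs
  by_contra hpos
  push_neg at hpos
  set k : ℝ → ℝ := fun r => m ^ 2 - (E - v * f r) ^ 2 with hk
  set g : ℝ → ℝ := fun r => r ^ (p + 1) * deriv R r with hgdef
  -- k is monotone
  have hkmono : ∀ a b : ℝ, 0 < a → a ≤ b → k a ≤ k b := by
    intro a b ha hab
    have hb : 0 < b := lt_of_lt_of_le ha hab
    have hfab : f a ≤ f b := hf.mono ha hb hab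
    have h1 : 0 ≤ E - v * f b := sub_nonneg.mpr (hfE b hb)
    have h2 : E - v * f b ≤ E - v * f a := by nlinarith
    have := pow_le_pow_left₀ h1 h2 2
    simp only [hk]
    nlinarith
  -- derivative of g
  have hgd : ∀ r > (0:ℝ), HasDerivAt g (r ^ (p + 1) * (k r * R r)) r := by
    intro r hr
    have h1 : HasDerivAt (fun x : ℝ => x ^ (p + 1)) (((p:ℝ) + 1) * r ^ p) r := by
      have := hasDerivAt_pow (p + 1) r
      simpa using this
    have h2 : HasDerivAt (deriv R) (deriv (deriv R) r) r := (hR2 r hr).hasDerivAt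
    have h3 := h1.mul h2
    have heq := heqn r hr
    have hr' : r ≠ 0 := ne_of_gt hr
    have hdd : deriv (deriv R) r = k r * R r - (((p:ℝ) + 1) / r) * deriv R r := by
      push_cast at heq
      rw [show ((p:ℝ) + 2 - 1) = (p:ℝ) + 1 from by ring] at heq
      simp only [hk]
      linarith
    have hval : ((p:ℝ) + 1) * r ^ p * deriv R r + r ^ (p + 1) * deriv (deriv R) r
        = r ^ (p + 1) * (k r * R r) := by
      rw [hdd]
      field_simp
      ring
    rw [← hval]
    exact h3
  have hgderiv : ∀ r > (0:ℝ), deriv g r = r ^ (p + 1) * (k r * R r) := fun r hr =>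
    (hgd r hr).deriv
  have hgcont : ∀ t : Set ℝ, t ⊆ Ioi 0 → ContinuousOn g t := fun t ht x hx =>
    ((hgd x (ht hx)).differentiableAt.continuousAt).continuousWithinAt
  have hgs : 0 < g s := mul_pos (pow_pos hs _) hpos
  rcases lt_or_ge (k s) 0 with hks | hks
  · -- k s < 0 : g antitone on Ioc 0 s, so g s ≤ 0
    have hanti : AntitoneOn g (Ioc 0 s) := by
      apply antitoneOn_of_deriv_nonpos (convex_Ioc 0 s)
        (hgcont _ (fun x hx => hx.1))
      · intro x hx
        rw [interior_Ioc] at hx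
        exact (hgd x hx.1).differentiableAt.differentiableWithinAt
      · intro x hx
        rw [interior_Ioc] at hx
        rw [hgderiv x hx.1]
        have hkx : k x ≤ k s := hkmono x s hx.1 hx.2.le
        have hkx0 : k x < 0 := lt_of_le_of_lt hkx hks
        have hRx := hRpos x hx.1
        have h1 : k x * R x ≤ 0 := by nlinarith
        nlinarith [pow_nonneg hx.1.le (p + 1), h1]
    have hev : ∀ᶠ t in 𝓝[>] (0:ℝ), g s ≤ g t := by
      filter_upwards [Ioo_mem_nhdsGT_of_mem (by exact ⟨le_refl 0, hs⟩ : (0:ℝ) ∈ Ico 0 s)]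
        with t ht
      exact hanti ⟨ht.1, ht.2.le⟩ ⟨hs, le_refl s⟩ ht.2.le
    have : g s ≤ 0 := ge_of_tendsto hbc0 hev
    linarith
  · -- k s ≥ 0 : g monotone on Ici s, so deriv R > 0 on Ici s, R increasing, contra R → 0
    have hmono : MonotoneOn g (Ici s) := by
      apply monotoneOn_of_deriv_nonneg (convex_Ici s)
        (hgcont _ (fun x hx => lt_of_lt_of_le hs hx))
      · intro x hx
        rw [interior_Ici] at hx
        exact (hgd x (hs.trans hx)).differentiableAt.differentiableWithinAt
      · intro x hx
        rw [interior_Ici] at hx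
        have hx0 : 0 < x := hs.trans hx
        rw [hgderiv x hx0]
        have hkx : 0 ≤ k x := le_trans hks (hkmono s x hs hx.le)
        have := hRpos x hx0
        positivity
    have hR'pos : ∀ x, s ≤ x → 0 < deriv R x := by
      intro x hxs
      have hx0 : 0 < x := lt_of_lt_of_le hs hxs
      have : g s ≤ g x := hmono (le_refl s) hxs hxs
      have hgx : 0 < g x := lt_of_lt_of_le hgs this
      have hxp : 0 < x ^ (p + 1) := pow_pos hx0 _
      by_contra h
      push_neg at h
      simp only [hgdef] at hgx
      nlinarith [hxp, h, hgx]
    have hRmono : MonotoneOn R (Ici s) := by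
      apply monotoneOn_of_deriv_nonneg (convex_Ici s)
      · intro x hx
        exact ((hR1 x (lt_of_lt_of_le hs hx)).continuousAt).continuousWithinAt
      · intro x hx
        rw [interior_Ici] at hx
        exact (hR1 x (hs.trans hx)).differentiableWithinAt
      · intro x hx
        rw [interior_Ici] at hx
        exact (hR'pos x hx.le).le
    have hev : ∀ᶠ t in atTop, R s ≤ R t := by
      filter_upwards [eventually_ge_atTop s] with t ht
      exact hRmono (le_refl s) ht ht
    have : R s ≤ 0 := ge_of_tendsto hbcInf hev
    linarith [hRpos s hs]
end

section
/- Let d ≥ 3 be an integer, m > 0, and E ∈ (−m, m). Let w : (0,∞) → ℝ be continuous, non-increasing, with 0 < w(0⁺) ≤ 1 (i.e., w(r) ≤ 1 for all r > 0 and w not identically zero) and w(r) → 0 as r → ∞, and set f(r) = −w(r)/r. Let 0 < v < (d−2)/2, and let R : (0,∞) → ℝ be a twice continuously differentiable, strictly positive radial ground state of R''(r) + ((d−1)/r) R'(r) = [m² − (E − v f(r))²] R(r), normalized by ∫₀^∞ R(r)² r^{d−1} dr = 1, with r^{d−1} R(r) R'(r) → 0 as r → 0⁺ and as r → ∞, and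 such that ∫₀^∞ R'(r)² r^{d−1} dr, ∫₀^∞ R(r)² r^{d−3} dr, ∫₀^∞ f(r) R(r)² r^{d−1} dr, and ∫₀^∞ f(r)² R(r)² r^{d−1} dr are all finite. Then E > 0. -/
open MeasureTheory Filter Set
open scoped Topology

lemma amgm_abs_le (a b c : ℝ) (ha : 0 ≤ a) (hb : 0 ≤ b) (hc : c^2 = a * b) :
    |c| ≤ (a + b) / 2 := by
  have h1 : |c| = Real.sqrt (a * b) := by rw [← hc, Real.sqrt_sq_eq_abs]
  have h2 : Real.sqrt a ^ 2 = a := Real.sq_sqrt ha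
  have h3 : Real.sqrt b ^ 2 = b := Real.sq_sqrt hb
  have h4 : Real.sqrt (a * b) = Real.sqrt a * Real.sqrt b := Real.sqrt_mul ha b
  nlinarith [sq_nonneg (Real.sqrt a - Real.sqrt b)]

lemma ftc_Ioi_helper (φ φ' : ℝ → ℝ)
    (hderiv : ∀ r ∈ Ioi (0:ℝ), HasDerivAt φ (φ' r) r)
    (hcont : ContinuousOn φ' (Ioi 0))
    (hint : IntegrableOn φ' (Ioi 0)) :
    Tendsto φ atTop (𝓝 (φ 1 + ∫ r in Ioi 1, φ' r)) ∧
    Tendsto φ (𝓝[>] 0) (𝓝 (φ 1 - ∫ r in Ioc 0 1, φ' r)) ∧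
    (∫ r in Ioi (0:ℝ), φ' r)
      = (φ 1 + ∫ r in Ioi 1, φ' r) - (φ 1 - ∫ r in Ioc 0 1, φ' r) := by
  have ftc : ∀ a b : ℝ, 0 < a → a ≤ b → (∫ x in a..b, φ' x) = φ b - φ a := by
    intro a b ha hab
    apply intervalIntegral.integral_eq_sub_of_hasDerivAt
    · intro x hx
      rw [uIcc_of_le hab] at hx
      exact hderiv x (lt_of_lt_of_le ha hx.1)
    · apply (hcont.mono ?_).intervalIntegrable
      rw [uIcc_of_le hab]
      intro x hx; exact lt_of_lt_of_le ha hx.1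
  have hi1 : IntegrableOn φ' (Ioi 1) := hint.mono_set (Ioi_subset_Ioi zero_le_one)
  have hi01 : IntegrableOn φ' (Ioc 0 1) := hint.mono_set Ioc_subset_Ioi_self
  have t1 : Tendsto (fun b => ∫ x in (1:ℝ)..b, φ' x) atTop (𝓝 (∫ r in Ioi 1, φ' r)) :=
    intervalIntegral_tendsto_integral_Ioi 1 hi1 tendsto_id
  have htop : Tendsto φ atTop (𝓝 (φ 1 + ∫ r in Ioi 1, φ' r)) := by
    refine ((tendsto_const_nhds.add t1).congr' ?_)
    filter_upwards [eventually_ge_atTop (1:ℝ)] with b hb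
    rw [ftc 1 b one_pos hb]; ring
  have cover : AECover (volume.restrict (Ioc (0:ℝ) 1)) (𝓝[>] (0:ℝ)) (fun ε => Ioi ε) := by
    constructor
    · rw [ae_restrict_iff' measurableSet_Ioc]
      filter_upwards with x hx
      have : Ioo 0 x ∈ 𝓝[>] (0:ℝ) := Ioo_mem_nhdsGT_of_mem ⟨le_refl _, hx.1⟩
      filter_upwards [this] with ε hε
      exact hε.2
    · intro ε; exact measurableSet_Ioi
  have t2 : Tendsto (fun ε => ∫ x in Ioc ε 1, φ' x) (𝓝[>] (0:ℝ))
      (𝓝 (∫ r in Ioc 0 1, φ' r)) := by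
    have := cover.integral_tendsto_of_countably_generated hi01
    refine this.congr' ?_
    filter_upwards [Ioo_mem_nhdsGT_of_mem (α := ℝ) ⟨le_refl 0, zero_lt_one⟩] with ε hε
    rw [Measure.restrict_restrict measurableSet_Ioi]
    rw [inter_comm, Ioc_inter_Ioi, sup_of_le_right hε.1.le]
  have hzero : Tendsto φ (𝓝[>] 0) (𝓝 (φ 1 - ∫ r in Ioc 0 1, φ' r)) := by
    refine ((tendsto_const_nhds.sub t2).congr' ?_)
    filter_upwards [Ioo_mem_nhdsGT_of_mem (α := ℝ) ⟨le_refl 0, zero_lt_one⟩] with ε hε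
    have := ftc ε 1 hε.1 hε.2.le
    rw [intervalIntegral.integral_of_le hε.2.le] at this
    rw [this]; ring
  refine ⟨htop, hzero, ?_⟩
  rw [← Ioc_union_Ioi_eq_Ioi (zero_le_one : (0:ℝ) ≤ 1),
    setIntegral_union (Ioc_disjoint_Ioi le_rfl) measurableSet_Ioi hi01 hi1]
  ring

set_option maxHeartbeats 2000000 in
/-- for a Coulomb-like potential `f(r) = −w(r)/r` in dimension `d ≥ 3`,
with `w` continuous, non-increasing, `w ≤ 1`, not identically zero, vanishing at
infinity, and coupling `0 < v < (d−2)/2`, the ground-state energy `E ∈ (−m, m)` of the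
radial Klein--Gordon equation is positive. -/
theorem kleinGordon_coulombLike_energy_pos
    (d : ℕ) (hd : 3 ≤ d) (m E : ℝ) (hm : 0 < m) (hE : E ∈ Ioo (-m) m)
    (w : ℝ → ℝ) (hw_cont : ContinuousOn w (Ioi 0))
    (hw_anti : AntitoneOn w (Ioi 0))
    (hw_le : ∀ r > (0:ℝ), w r ≤ 1)
    (hw_ne : ∃ r > (0:ℝ), w r ≠ 0)
    (hw_lim : Tendsto w atTop (𝓝 0))
    (f : ℝ → ℝ) (hf : ∀ r, f r = -(w r) / r)
    (v : ℝ) (hv : 0 < v) (hv' : v < ((d:ℝ) - 2) / 2)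
    (R : ℝ → ℝ)
    (hR1 : ∀ r > (0:ℝ), DifferentiableAt ℝ R r)
    (hR2 : ∀ r > (0:ℝ), DifferentiableAt ℝ (deriv R) r)
    (hR2c : ContinuousOn (deriv (deriv R)) (Ioi 0))
    (hRpos : ∀ r > (0:ℝ), 0 < R r)
    (heqn : ∀ r > (0:ℝ), deriv (deriv R) r + (((d:ℝ) - 1) / r) * deriv R r
        = (m ^ 2 - (E - v * f r) ^ 2) * R r)
    (hnorm : ∫ r in Ioi (0:ℝ), R r ^ 2 * r ^ (d - 1) = 1)
    (hbc0 : Tendsto (fun r : ℝ => r ^ (d - 1) * R r * deriv R r) (𝓝[>] 0) (𝓝 0))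
    (hbcInf : Tendsto (fun r : ℝ => r ^ (d - 1) * R r * deriv R r) atTop (𝓝 0))
    (hint1 : IntegrableOn (fun r => (deriv R r) ^ 2 * r ^ (d - 1)) (Ioi 0))
    (hint2 : IntegrableOn (fun r => R r ^ 2 * r ^ (d - 3)) (Ioi 0))
    (hint3 : IntegrableOn (fun r => f r * R r ^ 2 * r ^ (d - 1)) (Ioi 0))
    (hint4 : IntegrableOn (fun r => f r ^ 2 * R r ^ 2 * r ^ (d - 1)) (Ioi 0)) :
    0 < E := by
  -- power bookkeeping
  have e21 : ∀ r : ℝ, r ^ (d-1) = r ^ (d-2) * r := by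
    intro r
    rw [← pow_succ]
    congr 1; omega
  have e32 : ∀ r : ℝ, r ^ (d-2) = r ^ (d-3) * r := by
    intro r
    rw [← pow_succ]
    congr 1; omega
  have e31 : ∀ r : ℝ, r ^ (d-1) = r ^ (d-3) * r ^ 2 := by
    intro r
    rw [← pow_add]
    congr 1; omega
  have cd1 : ((d-1 : ℕ) : ℝ) = (d:ℝ) - 1 := by
    rw [Nat.cast_sub (by omega)]; norm_num
  have cd2 : ((d-2 : ℕ) : ℝ) = (d:ℝ) - 2 := by
    rw [Nat.cast_sub (by omega)]; norm_num
  -- continuity facts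
  have hRcont : ContinuousOn R (Ioi 0) :=
    fun r hr => ((hR1 r hr).continuousAt).continuousWithinAt
  have hR'cont : ContinuousOn (deriv R) (Ioi 0) :=
    fun r hr => ((hR2 r hr).continuousAt).continuousWithinAt
  have hfcont : ContinuousOn f (Ioi 0) := by
    have : ContinuousOn (fun r => -(w r) / r) (Ioi 0) :=
      (hw_cont.neg).div continuousOn_id (fun r hr => ne_of_gt hr)
    exact this.congr (fun r _ => hf r)
  -- sign facts for w, f
  have hw0 : ∀ r > (0:ℝ), 0 ≤ w r := by
    intro r hr
    refine le_of_tendsto hw_lim ?_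
    filter_upwards [eventually_ge_atTop r] with s hs
    exact hw_anti hr (lt_of_lt_of_le hr hs) hs
  have hf_nonpos : ∀ r > (0:ℝ), f r ≤ 0 := by
    intro r hr
    rw [hf r]
    exact div_nonpos_of_nonpos_of_nonneg (neg_nonpos.2 (hw0 r hr)) hr.le
  -- integrability of R^2 r^(d-1)
  have hA_int : IntegrableOn (fun r => R r ^ 2 * r ^ (d-1)) (Ioi 0) := by
    by_contra h
    rw [integral_undef h] at hnorm
    norm_num at hnorm
  -- rearranged ODE
  have hR'' : ∀ r > (0:ℝ), deriv (deriv R) r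
      = (m ^ 2 - (E - v * f r) ^ 2) * R r - (((d:ℝ) - 1) / r) * deriv R r := by
    intro r hr
    have := heqn r hr
    linarith
  -- First identity: ∫ G = 0 where G = R'^2 r^{d-1} + (m²-(E-vf)²) R² r^{d-1}
  set G : ℝ → ℝ := fun r =>
    (deriv R r) ^ 2 * r ^ (d-1) + (m ^ 2 - (E - v * f r) ^ 2) * (R r ^ 2 * r ^ (d-1))
    with hG_def
  have hGsplit : G = fun r =>
      (deriv R r) ^ 2 * r ^ (d-1)
      + ((m ^ 2 - E ^ 2) * (R r ^ 2 * r ^ (d-1))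
        + ((2 * E * v) * (f r * R r ^ 2 * r ^ (d-1))
          + (-(v ^ 2)) * (f r ^ 2 * R r ^ 2 * r ^ (d-1)))) := by
    funext r; simp only [hG_def]; ring
  have hGint : IntegrableOn G (Ioi 0) := by
    rw [hGsplit]
    exact hint1.add ((hA_int.const_mul _).add
      ((hint3.const_mul _).add (hint4.const_mul _)))
  have hGcont : ContinuousOn G (Ioi 0) := by
    apply ContinuousOn.add
    · exact ((hR'cont.pow 2).mul (continuous_pow _).continuousOn)
    · apply ContinuousOn.mul
      · apply ContinuousOn.sub continuousOn_const
        exact ((continuousOn_const.sub (continuousOn_const.mul hfcont)).pow 2)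
      · exact ((hRcont.pow 2).mul (continuous_pow _).continuousOn)
  have hgderiv : ∀ r ∈ Ioi (0:ℝ),
      HasDerivAt (fun r : ℝ => r ^ (d-1) * R r * deriv R r) (G r) r := by
    intro r hr
    have hr' : (0:ℝ) < r := hr
    have h1 : HasDerivAt (fun x : ℝ => x ^ (d-1)) (((d:ℝ) - 1) * r ^ (d-2)) r := by
      have h := hasDerivAt_pow (d-1) r
      have e : d - 1 - 1 = d - 2 := by omega
      rw [e, cd1] at h
      exact h
    have h2 : HasDerivAt R (deriv R r) r := (hR1 r hr').hasDerivAt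
    have h3 : HasDerivAt (deriv R) (deriv (deriv R) r) r := (hR2 r hr').hasDerivAt
    have := (h1.mul h2).mul h3
    refine this.congr_deriv ?_
    simp only [hG_def, Pi.mul_apply]
    rw [hR'' r hr', e21 r]
    field_simp
    ring
  obtain ⟨hgtop, hgzero, hgsum⟩ := ftc_Ioi_helper _ _ hgderiv hGcont hGint
  have hb1 : (fun r : ℝ => r ^ (d-1) * R r * deriv R r) 1
      + ∫ r in Ioi 1, G r = 0 := tendsto_nhds_unique hgtop hbcInf
  have hb2 : (fun r : ℝ => r ^ (d-1) * R r * deriv R r) 1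
      - ∫ r in Ioc 0 1, G r = 0 := tendsto_nhds_unique hgzero hbc0
  have hG0 : (∫ r in Ioi (0:ℝ), G r) = 0 := by
    rw [hgsum, hb1, hb2]; ring
  -- expand ∫ G
  have hGval : (∫ r in Ioi (0:ℝ), G r)
      = (∫ r in Ioi (0:ℝ), (deriv R r) ^ 2 * r ^ (d-1))
        + ((m ^ 2 - E ^ 2) * 1
          + ((2 * E * v) * (∫ r in Ioi (0:ℝ), f r * R r ^ 2 * r ^ (d-1))
            + (-(v ^ 2)) * (∫ r in Ioi (0:ℝ), f r ^ 2 * R r ^ 2 * r ^ (d-1)))) := by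
    have i4 : IntegrableOn (fun r => (2 * E * v) * (f r * R r ^ 2 * r ^ (d-1))
        + (-(v ^ 2)) * (f r ^ 2 * R r ^ 2 * r ^ (d-1))) (Ioi 0) :=
      (hint3.const_mul _).add (hint4.const_mul _)
    have i2 : IntegrableOn (fun r => (m ^ 2 - E ^ 2) * (R r ^ 2 * r ^ (d-1))
        + ((2 * E * v) * (f r * R r ^ 2 * r ^ (d-1))
          + (-(v ^ 2)) * (f r ^ 2 * R r ^ 2 * r ^ (d-1)))) (Ioi 0) :=
      (hA_int.const_mul _).add i4
    simp only [hGsplit, ← hnorm]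
    rw [integral_add hint1 i2, integral_add (hA_int.const_mul _) i4,
      integral_add (hint3.const_mul _) (hint4.const_mul _),
      integral_const_mul, integral_const_mul, integral_const_mul]
  -- name the integrals
  set T := ∫ r in Ioi (0:ℝ), (deriv R r) ^ 2 * r ^ (d-1) with hT
  set If := ∫ r in Ioi (0:ℝ), f r * R r ^ 2 * r ^ (d-1) with hIf
  set If2 := ∫ r in Ioi (0:ℝ), f r ^ 2 * R r ^ 2 * r ^ (d-1) with hIf2
  set J := ∫ r in Ioi (0:ℝ), R r ^ 2 * r ^ (d-3) with hJ
  set K := ∫ r in Ioi (0:ℝ), R r * deriv R r * r ^ (d-2) with hK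
  have energy : T + m ^ 2 = E ^ 2 - 2 * E * v * If + v ^ 2 * If2 := by
    have h := hGval
    rw [hG0] at h
    linarith
  -- K integrand integrability
  have hKint : IntegrableOn (fun r => R r * deriv R r * r ^ (d-2)) (Ioi 0) := by
    apply Integrable.mono' ((hint2.add hint1).const_mul (1/2 : ℝ))
    · exact (((hRcont.mul hR'cont).mul (continuous_pow _).continuousOn).aestronglyMeasurable
        measurableSet_Ioi)
    · rw [ae_restrict_iff' measurableSet_Ioi]
      filter_upwards with r hr
      have hr' : (0:ℝ) < r := hr
      have hpow : r ^ (d-3) * r ^ (d-1) = r ^ (d-2) * r ^ (d-2) := by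
        rw [← pow_add, ← pow_add]; congr 1; omega
      have hsq : (R r * deriv R r * r ^ (d-2)) ^ 2
          = (R r ^ 2 * r ^ (d-3)) * ((deriv R r) ^ 2 * r ^ (d-1)) := by
        nlinarith [hpow, sq_nonneg (R r * deriv R r)]
      have := amgm_abs_le (R r ^ 2 * r ^ (d-3)) ((deriv R r) ^ 2 * r ^ (d-1))
        (R r * deriv R r * r ^ (d-2))
        (mul_nonneg (sq_nonneg _) (pow_nonneg hr'.le _))
        (mul_nonneg (sq_nonneg _) (pow_nonneg hr'.le _)) hsq
      rw [Real.norm_eq_abs]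
      simp only [Pi.add_apply]
      linarith
  -- the weighted square h2f = R² r^{d-2} and its derivative Hf
  set h2f := fun r : ℝ => R r ^ 2 * r ^ (d-2) with hh_def
  set Hf := fun r : ℝ => 2 * (R r * deriv R r * r ^ (d-2))
      + ((d:ℝ) - 2) * (R r ^ 2 * r ^ (d-3)) with hH_def
  have hHint : IntegrableOn Hf (Ioi 0) := by
    rw [hH_def]
    exact (hKint.const_mul 2).add (hint2.const_mul _)
  have hHcont : ContinuousOn Hf (Ioi 0) := by
    rw [hH_def]
    apply ContinuousOn.add
    · exact continuousOn_const.mul ((hRcont.mul hR'cont).mul (continuous_pow _).continuousOn)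
    · exact continuousOn_const.mul ((hRcont.pow 2).mul (continuous_pow _).continuousOn)
  have hhderiv : ∀ r ∈ Ioi (0:ℝ), HasDerivAt h2f (Hf r) r := by
    intro r hr
    have hr' : (0:ℝ) < r := hr
    have h2 : HasDerivAt R (deriv R r) r := (hR1 r hr').hasDerivAt
    have hp : HasDerivAt (fun x : ℝ => x ^ (d-2)) (((d:ℝ) - 2) * r ^ (d-3)) r := by
      have h := hasDerivAt_pow (d-2) r
      have e : d - 2 - 1 = d - 3 := by omega
      rw [e, cd2] at h
      exact h
    have hprod := (h2.pow 2).mul hp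
    have hval : Hf r = ((2:ℕ) * R r ^ (2-1) * deriv R r) * r ^ (d-2)
        + R r ^ 2 * (((d:ℝ) - 2) * r ^ (d-3)) := by
      rw [hH_def]
      push_cast
      ring
    rw [hval, hh_def]
    exact hprod
  obtain ⟨hhtop, hhzero, hhsum⟩ := ftc_Ioi_helper h2f Hf hhderiv hHcont hHint
  have hh_nonneg : ∀ r > (0:ℝ), 0 ≤ h2f r := by
    intro r hr
    rw [hh_def]
    exact mul_nonneg (sq_nonneg _) (pow_nonneg hr.le _)
  -- limit at infinity is zero
  have hLinf_eq : h2f 1 + (∫ r in Ioi 1, Hf r) = 0 := by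
    by_contra hne
    have hL_nonneg : 0 ≤ h2f 1 + ∫ r in Ioi 1, Hf r := by
      refine ge_of_tendsto hhtop ?_
      filter_upwards [eventually_gt_atTop (0:ℝ)] with r hr
      exact hh_nonneg r hr
    have hLpos : 0 < h2f 1 + ∫ r in Ioi 1, Hf r := lt_of_le_of_ne hL_nonneg (Ne.symm hne)
    set L := h2f 1 + ∫ r in Ioi 1, Hf r with hL
    have hev : ∀ᶠ r in atTop, L / 2 ≤ h2f r :=
      hhtop.eventually (eventually_ge_nhds (by linarith))
    obtain ⟨A, hA⟩ := eventually_atTop.1 hev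
    set B := max A 1 with hB_def
    have hB : (0:ℝ) < B := lt_of_lt_of_le one_pos (le_max_right _ _)
    have hmono : IntegrableOn (fun r : ℝ => L/2 * r⁻¹) (Ioi B) := by
      apply Integrable.mono' (hint2.mono_set (Ioi_subset_Ioi hB.le))
      · exact (measurable_const.mul measurable_inv).aestronglyMeasurable
      · rw [ae_restrict_iff' measurableSet_Ioi]
        filter_upwards with r hr
        have hrB : B < r := hr
        have hr' : (0:ℝ) < r := lt_trans hB hrB
        have hhr : L / 2 ≤ h2f r := hA r (le_of_lt (lt_of_le_of_lt (le_max_left A 1) hrB))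
        have heq : R r ^ 2 * r ^ (d-3) = h2f r * r⁻¹ := by
          rw [hh_def]
          simp only
          rw [e32 r]
          field_simp
        have hle : L/2 * r⁻¹ ≤ R r ^ 2 * r ^ (d-3) := by
          rw [heq]
          exact mul_le_mul_of_nonneg_right hhr (inv_nonneg.2 hr'.le)
        rw [Real.norm_eq_abs, abs_of_nonneg
          (mul_nonneg (by linarith : (0:ℝ) ≤ L/2) (inv_nonneg.2 hr'.le))]
        exact hle
    have hinv : IntegrableOn (fun r : ℝ => r⁻¹) (Ioi B) := by
      have h2 := hmono.const_mul (2/L)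
      have hL0 : L ≠ 0 := ne_of_gt hLpos
      have heq : (fun r : ℝ => (2/L) * (L/2 * r⁻¹)) = fun r : ℝ => r⁻¹ := by
        funext r
        rw [← mul_assoc]
        have h1 : (2/L) * (L/2) = 1 := by field_simp
        rw [h1, one_mul]
      rwa [heq] at h2
    have hrpow : IntegrableOn (fun x : ℝ => x ^ (-1:ℝ)) (Ioi B) := by
      simpa only [Real.rpow_neg_one] using hinv
    have := (integrableOn_Ioi_rpow_iff hB).1 hrpow
    linarith
  have hL0_nonneg : 0 ≤ h2f 1 - ∫ r in Ioc 0 1, Hf r := by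
    refine ge_of_tendsto hhzero ?_
    filter_upwards [self_mem_nhdsWithin] with r hr
    exact hh_nonneg r hr
  have hHsum_le : (∫ r in Ioi (0:ℝ), Hf r) ≤ 0 := by
    rw [hhsum, hLinf_eq]
    linarith
  have hHval : (∫ r in Ioi (0:ℝ), Hf r) = 2 * K + ((d:ℝ) - 2) * J := by
    rw [hK, hJ]
    simp only [hH_def]
    rw [integral_add (hKint.const_mul 2) (hint2.const_mul _),
      integral_const_mul, integral_const_mul]
  have hKbound : 2 * K + ((d:ℝ) - 2) * J ≤ 0 := by
    rw [← hHval]; exact hHsum_le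
  -- Hardy inequality
  set c := ((d:ℝ) - 2) / 2 with hc
  have hd3 : (3:ℝ) ≤ (d:ℝ) := by exact_mod_cast hd
  have hcpos : 0 < c := by rw [hc]; linarith
  have iHardy1 : IntegrableOn (fun r => (deriv R r) ^ 2 * r ^ (d-1)
      + (2*c) * (R r * deriv R r * r ^ (d-2))) (Ioi 0) :=
    hint1.add (hKint.const_mul _)
  have hHardy0 : 0 ≤ ∫ r in Ioi (0:ℝ), ((deriv R r) ^ 2 * r ^ (d-1)
      + (2*c) * (R r * deriv R r * r ^ (d-2)) + c ^ 2 * (R r ^ 2 * r ^ (d-3))) := by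
    apply setIntegral_nonneg measurableSet_Ioi
    intro r hr
    have hr' : (0:ℝ) < r := hr
    have key : (deriv R r) ^ 2 * r ^ (d-1) + (2*c) * (R r * deriv R r * r ^ (d-2))
        + c ^ 2 * (R r ^ 2 * r ^ (d-3))
        = (deriv R r + c * R r / r) ^ 2 * (r ^ (d-3) * r ^ 2) := by
      rw [e31 r, e32 r]
      field_simp
      ring
    rw [key]
    exact mul_nonneg (sq_nonneg _)
      (mul_nonneg (pow_nonneg hr'.le _) (pow_nonneg hr'.le _))
  have hHardyval : (∫ r in Ioi (0:ℝ), ((deriv R r) ^ 2 * r ^ (d-1)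
      + (2*c) * (R r * deriv R r * r ^ (d-2)) + c ^ 2 * (R r ^ 2 * r ^ (d-3))))
      = T + (2*c) * K + c ^ 2 * J := by
    rw [hT, hK, hJ]
    rw [integral_add iHardy1 (hint2.const_mul _),
      integral_add hint1 (hKint.const_mul _),
      integral_const_mul, integral_const_mul]
  have hHardy : c ^ 2 * J ≤ T := by
    have h0 : 0 ≤ T + (2*c) * K + c ^ 2 * J := by rw [← hHardyval]; exact hHardy0
    have h2c : (d:ℝ) - 2 = 2 * c := by rw [hc]; ring
    rw [h2c] at hKbound
    nlinarith [mul_le_mul_of_nonneg_left hKbound hcpos.le]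
  -- J > 0
  have hJpos : 0 < J := by
    rw [hJ]
    rw [setIntegral_pos_iff_support_of_nonneg_ae ?_ hint2]
    · refine lt_of_lt_of_le ?_ (measure_mono (fun r (hr : r ∈ Ioi (0:ℝ)) =>
        ⟨(mul_pos (pow_pos (hRpos r hr) 2) (pow_pos hr _)).ne', hr⟩))
      rw [Real.volume_Ioi]
      exact ENNReal.zero_lt_top
    · rw [EventuallyLE, ae_restrict_iff' measurableSet_Ioi]
      filter_upwards with r hr
      exact mul_nonneg (sq_nonneg _) (pow_nonneg (le_of_lt hr) _)
  -- sign of If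
  have hIf_nonpos : If ≤ 0 := by
    rw [hIf]
    apply setIntegral_nonpos measurableSet_Ioi
    intro r hr
    exact mul_nonpos_of_nonpos_of_nonneg
      (mul_nonpos_of_nonpos_of_nonneg (hf_nonpos r hr) (sq_nonneg _))
      (pow_nonneg (le_of_lt hr) _)
  -- If2 ≤ J
  have hIf2_le : If2 ≤ J := by
    rw [hIf2, hJ]
    apply setIntegral_mono_on hint4 hint2 measurableSet_Ioi
    intro r hr
    have hr' : (0:ℝ) < r := hr
    have h1 : f r ^ 2 * r ^ (d-1) = w r ^ 2 * r ^ (d-3) := by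
      rw [hf r, e31 r]
      field_simp
    have hw1 : w r ^ 2 ≤ 1 := by nlinarith [hw0 r hr', hw_le r hr']
    have hfr : f r ^ 2 * r ^ (d-1) ≤ r ^ (d-3) := by
      rw [h1]
      nlinarith [pow_nonneg hr'.le (d-3)]
    calc f r ^ 2 * R r ^ 2 * r ^ (d-1) = R r ^ 2 * (f r ^ 2 * r ^ (d-1)) := by ring
      _ ≤ R r ^ 2 * r ^ (d-3) := mul_le_mul_of_nonneg_left hfr (sq_nonneg _)
  -- conclusion
  by_contra hEc
  push_neg at hEc
  have hE2 : E ^ 2 ≤ m ^ 2 := by nlinarith [hE.1, hE.2]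
  have hterm : -(2 * E * v * If) ≤ 0 := by
    nlinarith [mul_nonneg (neg_nonneg.2 hEc) (neg_nonneg.2 hIf_nonpos)]
  have hTle : T ≤ v ^ 2 * J := by
    nlinarith [energy, hIf2_le, sq_nonneg v]
  have hvc : v ^ 2 < c ^ 2 := by nlinarith
  nlinarith [mul_pos (sub_pos.2 hvc) hJpos]
end

section
/- Let v > 0 and E ∈ ℝ. Let f, f₁, f₂ : [0,∞) → ℝ be continuous, with f continuously differentiable and monotone non-decreasing, and v f(x) ≤ E for all x ≥ 0. Let φ : [0,∞) → ℝ be continuously differentiable with φ(x) ≥ 0 and φ'(x) ≤ 0 for all x ≥ 0, and φ(x) → 0 as x → ∞. Set μ(x) = ∫₀^x [f₂(t) − f₁(t)] dt, and assume μ(x) ≥ 0 for all x ≥ 0, that the integrals ∫₀^∞ (f₂ − f₁)(v f − E) φ² dx and ∫₀^∞ [v f'(x) φ(x)² + 2(v f(x) − E) φ(x) φ'(x)] μ(x) dx converge, and that (v f(x) − E) φ(x)² μ(x) → 0 as x → ∞. Then I = ∫₀^∞ [f₂(x) − f₁(x)] [v f(x) − E] φ(x)² dx ≤ 0. -/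
open MeasureTheory Filter Set
open scoped Topology

lemma deriv_nonneg_of_monotoneOn_Ici {f : ℝ → ℝ} (hm : MonotoneOn f (Ici 0)) {x : ℝ}
    (hx : 0 < x) (hd : DifferentiableAt ℝ f x) : 0 ≤ deriv f x := by
  have h := hd.hasDerivAt
  rw [hasDerivAt_iff_tendsto_slope] at h
  have h' : Tendsto (slope f x) (𝓝[>] x) (𝓝 (deriv f x)) :=
    h.mono_left (nhdsWithin_mono x (fun y hy => ne_of_gt hy))
  refine ge_of_tendsto h' ?_
  filter_upwards [self_mem_nhdsWithin] with y hy
  rw [slope_def_field]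
  have hxy : x ≤ y := le_of_lt hy
  have : f x ≤ f y := hm (le_of_lt hx) (le_trans (le_of_lt hx) hxy) hxy
  exact div_nonneg (by linarith) (by linarith [lt_of_lt_of_le hx hxy])

/-- key integral inequality of the one-dimensional refined comparison
theorem: if `μ(x) = ∫₀^x (f₂ − f₁) ≥ 0` for all `x ≥ 0`, then
`I = ∫₀^∞ (f₂ − f₁)(v f − E) φ² dx ≤ 0`. -/
theorem kleinGordon_refined_integral_ineq_1d
    (v E : ℝ) (hv : 0 < v)
    (f f₁ f₂ φ : ℝ → ℝ)
    (hf_cont : ContinuousOn f (Ici 0))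
    (hf₁_cont : ContinuousOn f₁ (Ici 0))
    (hf₂_cont : ContinuousOn f₂ (Ici 0))
    (hf_diff : ∀ x ≥ (0:ℝ), DifferentiableAt ℝ f x)
    (hf'_cont : ContinuousOn (deriv f) (Ici 0))
    (hf_mono : MonotoneOn f (Ici 0))
    (hfE : ∀ x ≥ (0:ℝ), v * f x ≤ E)
    (hφ_diff : ∀ x ≥ (0:ℝ), DifferentiableAt ℝ φ x)
    (hφ'_cont : ContinuousOn (deriv φ) (Ici 0))
    (hφ_nonneg : ∀ x ≥ (0:ℝ), 0 ≤ φ x)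
    (hφ'_nonpos : ∀ x ≥ (0:ℝ), deriv φ x ≤ 0)
    (hφ_lim : Tendsto φ atTop (𝓝 0))
    (hμ : ∀ x ≥ (0:ℝ), 0 ≤ ∫ t in (0:ℝ)..x, (f₂ t - f₁ t))
    (hint1 : IntegrableOn (fun x => (f₂ x - f₁ x) * (v * f x - E) * φ x ^ 2) (Ioi 0))
    (hint2 : IntegrableOn
      (fun x => (v * deriv f x * φ x ^ 2 + 2 * (v * f x - E) * φ x * deriv φ x)
        * ∫ t in (0:ℝ)..x, (f₂ t - f₁ t)) (Ioi 0))
    (hlim : Tendsto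
      (fun x => (v * f x - E) * φ x ^ 2 * ∫ t in (0:ℝ)..x, (f₂ t - f₁ t))
      atTop (𝓝 0)) :
    (∫ x in Ioi (0:ℝ), (f₂ x - f₁ x) * (v * f x - E) * φ x ^ 2) ≤ 0 := by
  set μf : ℝ → ℝ := fun x => ∫ t in (0:ℝ)..x, (f₂ t - f₁ t) with hμf
  set A : ℝ → ℝ := fun x =>
    (v * deriv f x * φ x ^ 2 + 2 * (v * f x - E) * φ x * deriv φ x) * μf x with hA
  set B : ℝ → ℝ := fun x => (f₂ x - f₁ x) * (v * f x - E) * φ x ^ 2 with hB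
  set F : ℝ → ℝ := fun x => (v * f x - E) * φ x ^ 2 * μf x with hF
  have hsub : ContinuousOn (fun t => f₂ t - f₁ t) (Ici 0) := hf₂_cont.sub hf₁_cont
  -- derivative of F on Ioi 0
  have hderiv : ∀ x ∈ Ioi (0:ℝ), HasDerivAt F (A x + B x) x := by
    intro x hx
    have hx0 : (0:ℝ) ≤ x := le_of_lt hx
    have h1 : HasDerivAt (fun y => v * f y - E) (v * deriv f x) x :=
      (((hf_diff x hx0).hasDerivAt).const_mul v).sub_const E
    have h2 : HasDerivAt (fun y => φ y ^ 2) (2 * φ x * deriv φ x) x := by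
      have := ((hφ_diff x hx0).hasDerivAt).pow 2
      simpa [Pi.pow_def] using this
    have hg : HasDerivAt (fun y => (v * f y - E) * φ y ^ 2)
        (v * deriv f x * φ x ^ 2 + (v * f x - E) * (2 * φ x * deriv φ x)) x := h1.mul h2
    have hii : IntervalIntegrable (fun t => f₂ t - f₁ t) volume 0 x := by
      apply ContinuousOn.intervalIntegrable
      apply hsub.mono
      rw [uIcc_of_le hx0]
      exact fun t ht => ht.1
    have hmeas : StronglyMeasurableAtFilter (fun t => f₂ t - f₁ t) (𝓝 x) volume :=
      ContinuousOn.stronglyMeasurableAtFilter isOpen_Ioi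
        (hsub.mono Ioi_subset_Ici_self) x hx
    have hca : ContinuousAt (fun t => f₂ t - f₁ t) x :=
      hsub.continuousAt (Ici_mem_nhds hx)
    have hμd : HasDerivAt μf (f₂ x - f₁ x) x :=
      intervalIntegral.integral_hasDerivAt_right hii hmeas hca
    have this : HasDerivAt F _ x := hg.fun_mul hμd
    convert this using 1
    simp only [hA, hB, hF]
    ring
  -- F is continuous at 0 within Ici 0
  have hμcont : ContinuousWithinAt μf (Ici 0) 0 := by
    have hint : IntegrableOn (fun t => f₂ t - f₁ t) (uIcc (0:ℝ) 1) volume := by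
      rw [uIcc_of_le (by norm_num : (0:ℝ) ≤ 1)]
      exact (hsub.mono (fun t ht => ht.1)).integrableOn_compact isCompact_Icc
    have hc : ContinuousOn μf (uIcc (0:ℝ) 1) :=
      intervalIntegral.continuousOn_primitive_interval hint
    have h0 : (0:ℝ) ∈ uIcc (0:ℝ) 1 := by
      rw [uIcc_of_le (by norm_num : (0:ℝ) ≤ 1)]; exact ⟨le_refl 0, by norm_num⟩
    refine (hc 0 h0).mono_of_mem_nhdsWithin ?_
    rw [uIcc_of_le (by norm_num : (0:ℝ) ≤ 1)]
    have : Icc (0:ℝ) 1 = Ici 0 ∩ Iic 1 := (Ici_inter_Iic).symm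
    rw [this]
    exact inter_mem_nhdsWithin _ (Iic_mem_nhds (by norm_num))
  have hFcont : ContinuousWithinAt F (Ici 0) 0 := by
    have hφc : ContinuousWithinAt φ (Ici 0) 0 :=
      (hφ_diff 0 le_rfl).continuousAt.continuousWithinAt
    have hfc : ContinuousWithinAt f (Ici 0) 0 := hf_cont 0 self_mem_Ici
    exact (((hfc.const_smul v).sub continuousWithinAt_const).mul (hφc.pow 2)).mul hμcont
  -- F tends to 0 at infinity
  have hFlim : Tendsto F atTop (𝓝 0) := hlim
  -- integrability of A + B
  have hintAB : IntegrableOn (fun x => A x + B x) (Ioi 0) := hint2.add hint1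
  have key : ∫ x in Ioi (0:ℝ), (A x + B x) = 0 - F 0 :=
    integral_Ioi_of_hasDerivAt_of_tendsto hFcont hderiv hintAB hFlim
  have hF0 : F 0 = 0 := by
    simp [hF, hμf, intervalIntegral.integral_same]
  rw [hF0, sub_zero] at key
  rw [integral_add hint2 hint1] at key
  -- ∫ A ≥ 0
  have hApos : 0 ≤ ∫ x in Ioi (0:ℝ), A x := by
    apply setIntegral_nonneg measurableSet_Ioi
    intro x hx
    have hx0 : (0:ℝ) ≤ x := le_of_lt hx
    have h1 : 0 ≤ v * deriv f x * φ x ^ 2 :=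
      mul_nonneg (mul_nonneg hv.le
        (deriv_nonneg_of_monotoneOn_Ici hf_mono hx (hf_diff x hx0))) (sq_nonneg _)
    have h2 : 0 ≤ 2 * (v * f x - E) * φ x * deriv φ x := by
      have ha : v * f x - E ≤ 0 := by linarith [hfE x hx0]
      have hb := hφ_nonneg x hx0
      have hc := hφ'_nonpos x hx0
      nlinarith [mul_nonneg hb (mul_nonneg (neg_nonneg.2 ha) (neg_nonneg.2 hc))]
    exact mul_nonneg (by linarith) (hμ x hx0)
  -- conclude
  have : ∫ x in Ioi (0:ℝ), B x ≤ 0 := by linarith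
  exact this
end

section
/- Let v > 0 and E ∈ ℝ. Let f, f₁, f₂ : [0,∞) → ℝ be continuous, with f continuously differentiable and monotone non-decreasing, and v f(x) ≤ E for all x ≥ 0. Let φ, φ₁ : [0,∞) → ℝ be continuously differentiable with φ(x) ≥ 0, φ'(x) ≤ 0, and φ₁(x) ≥ 0 for all x ≥ 0, and φ(x) → 0 as x → ∞. Set ρ(x) = ∫₀^x [f₂(t) − f₁(t)] φ₁(t) dt, and assume ρ(x) ≥ 0 for all x ≥ 0, that the integrals ∫₀^∞ (f₂ − f₁)(v f − E) φ₁ φ dx and ∫₀^∞ [v f'(x) φ(x) + (v f(x) − E) φ'(x)] ρ(x) dx converge, and that (v f(x) − E) φ(x) ρ(x) → 0 as x → ∞. Then ∫₀^∞ [f₂(x) − f₁(x)] [v f(x) − E] φ₁(x) φ(x) dx ≤ 0. -/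
open MeasureTheory Filter Set
open scoped Topology

/-- key integral inequality of the stronger one-dimensional refined
comparison theorem: if `ρ(x) = ∫₀^x (f₂ − f₁) φ₁ ≥ 0` for all `x ≥ 0`, then
`∫₀^∞ (f₂ − f₁)(v f − E) φ₁ φ dx ≤ 0`. -/
theorem kleinGordon_refined_integral_ineq_1d_strong
    (v E : ℝ) (hv : 0 < v)
    (f f₁ f₂ φ φ₁ : ℝ → ℝ)
    (hf_cont : ContinuousOn f (Ici 0))
    (hf₁_cont : ContinuousOn f₁ (Ici 0))
    (hf₂_cont : ContinuousOn f₂ (Ici 0))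
    (hf_diff : ∀ x ≥ (0:ℝ), DifferentiableAt ℝ f x)
    (hf'_cont : ContinuousOn (deriv f) (Ici 0))
    (hf_mono : MonotoneOn f (Ici 0))
    (hfE : ∀ x ≥ (0:ℝ), v * f x ≤ E)
    (hφ_diff : ∀ x ≥ (0:ℝ), DifferentiableAt ℝ φ x)
    (hφ'_cont : ContinuousOn (deriv φ) (Ici 0))
    (hφ₁_diff : ∀ x ≥ (0:ℝ), DifferentiableAt ℝ φ₁ x)
    (hφ₁'_cont : ContinuousOn (deriv φ₁) (Ici 0))
    (hφ_nonneg : ∀ x ≥ (0:ℝ), 0 ≤ φ x)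
    (hφ'_nonpos : ∀ x ≥ (0:ℝ), deriv φ x ≤ 0)
    (hφ₁_nonneg : ∀ x ≥ (0:ℝ), 0 ≤ φ₁ x)
    (hφ_lim : Tendsto φ atTop (𝓝 0))
    (hρ : ∀ x ≥ (0:ℝ), 0 ≤ ∫ t in (0:ℝ)..x, (f₂ t - f₁ t) * φ₁ t)
    (hint1 : IntegrableOn
      (fun x => (f₂ x - f₁ x) * (v * f x - E) * φ₁ x * φ x) (Ioi 0))
    (hint2 : IntegrableOn
      (fun x => (v * deriv f x * φ x + (v * f x - E) * deriv φ x)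
        * ∫ t in (0:ℝ)..x, (f₂ t - f₁ t) * φ₁ t) (Ioi 0))
    (hlim : Tendsto
      (fun x => (v * f x - E) * φ x * ∫ t in (0:ℝ)..x, (f₂ t - f₁ t) * φ₁ t)
      atTop (𝓝 0)) :
    (∫ x in Ioi (0:ℝ), (f₂ x - f₁ x) * (v * f x - E) * φ₁ x * φ x) ≤ 0 := by
  set h : ℝ → ℝ := fun t => (f₂ t - f₁ t) * φ₁ t with hh_def
  set ρ : ℝ → ℝ := fun x => ∫ t in (0:ℝ)..x, h t with hρ_def
  have hh_cont : ContinuousOn h (Ici 0) := by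
    apply (hf₂_cont.sub hf₁_cont).mul
    intro x hx
    exact ((hφ₁_diff x hx).continuousAt).continuousWithinAt
  -- interval integrability of h on [0, x] for x ≥ 0
  have hh_int : ∀ x ≥ (0:ℝ), IntervalIntegrable h volume 0 x := by
    intro x hx
    apply (hh_cont.mono ?_).intervalIntegrable
    rw [uIcc_of_le hx]
    exact fun t ht => ht.1
  -- ρ has derivative h x at each x > 0
  have hρ_deriv : ∀ x ∈ Ioi (0:ℝ), HasDerivAt ρ (h x) x := by
    intro x hx
    have hIci : Ici (0:ℝ) ∈ 𝓝 x := Ici_mem_nhds hx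
    have hcontAt : ContinuousAt h x := hh_cont.continuousAt hIci
    exact intervalIntegral.integral_hasDerivAt_right (hh_int x hx.le)
      ⟨Ici 0, hIci, hh_cont.aestronglyMeasurable measurableSet_Ici⟩ hcontAt
  -- ρ is continuous within Ici 0 at 0 (and ρ 0 = 0)
  have hρ0 : ρ 0 = 0 := intervalIntegral.integral_same
  have hρ_cont0 : ContinuousWithinAt ρ (Ici 0) 0 := by
    have : HasDerivWithinAt ρ (h 0) (Ici 0) 0 := by
      exact intervalIntegral.integral_hasDerivWithinAt_right (hh_int 0 le_rfl)
        (t := Ioi 0)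
        ⟨Ici 0, nhdsWithin_mono 0 Ioi_subset_Ici_self self_mem_nhdsWithin,
          hh_cont.aestronglyMeasurable measurableSet_Ici⟩
        ((hh_cont 0 self_mem_Ici).mono Ioi_subset_Ici_self)
    exact this.continuousWithinAt
  -- the combined function G = g * ρ with g = (v f − E) φ
  set G : ℝ → ℝ := fun x => (v * f x - E) * φ x * ρ x with hG_def
  set F : ℝ → ℝ := fun x =>
    (v * deriv f x * φ x + (v * f x - E) * deriv φ x) * ρ x
      + (f₂ x - f₁ x) * (v * f x - E) * φ₁ x * φ x with hF_def
  have hG_deriv : ∀ x ∈ Ioi (0:ℝ), HasDerivAt G (F x) x := by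
    intro x hx
    have hg : HasDerivAt (fun x => (v * f x - E) * φ x)
        (v * deriv f x * φ x + (v * f x - E) * deriv φ x) x := by
      exact (((hf_diff x hx.le).hasDerivAt.const_mul v).sub_const E).mul
        (hφ_diff x hx.le).hasDerivAt
    have := hg.mul (hρ_deriv x hx)
    refine this.congr_deriv ?_
    simp only [hF_def, hh_def]
    ring
  have hG_cont0 : ContinuousWithinAt G (Ici 0) 0 := by
    apply ContinuousWithinAt.mul _ hρ_cont0
    apply ContinuousWithinAt.mul
    · exact ((hf_cont 0 self_mem_Ici).const_smul v).sub continuousWithinAt_const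
    · exact (hφ_diff 0 le_rfl).continuousAt.continuousWithinAt
  have hF_int : IntegrableOn F (Ioi 0) := by
    have h2 := hint2.add hint1
    apply (IntegrableOn.congr_fun h2 · measurableSet_Ioi)
    intro x _
    simp only [hF_def, hρ_def, hh_def, Pi.add_apply]
  have hG0 : G 0 = 0 := by simp [hG_def, hρ0]
  have key : ∫ x in Ioi (0:ℝ), F x = 0 := by
    rw [MeasureTheory.integral_Ioi_of_hasDerivAt_of_tendsto hG_cont0 hG_deriv hF_int hlim, hG0,
      sub_zero]
  -- nonnegativity of the first part of F
  have hderiv_f_nonneg : ∀ x ∈ Ioi (0:ℝ), 0 ≤ deriv f x := by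
    intro x hx
    have hd := (hf_diff x hx.le).hasDerivAt
    rw [hasDerivAt_iff_tendsto_slope] at hd
    have hd' : Tendsto (slope f x) (𝓝[>] x) (𝓝 (deriv f x)) :=
      hd.mono_left (nhdsWithin_mono _ fun y hy => ne_of_gt hy)
    refine ge_of_tendsto hd' ?_
    filter_upwards [self_mem_nhdsWithin] with y hy
    have : f x ≤ f y := hf_mono (mem_Ici.mpr hx.le) (mem_Ici.mpr (hx.le.trans hy.le)) hy.le
    have hyx : 0 < y - x := sub_pos.mpr hy
    rw [slope_def_field]
    exact div_nonneg (sub_nonneg.mpr this) hyx.le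
  have hpart2_nonneg :
      0 ≤ ∫ x in Ioi (0:ℝ),
        (v * deriv f x * φ x + (v * f x - E) * deriv φ x) * ρ x := by
    apply setIntegral_nonneg measurableSet_Ioi
    intro x hx
    have h1 : 0 ≤ v * deriv f x * φ x :=
      mul_nonneg (mul_nonneg hv.le (hderiv_f_nonneg x hx)) (hφ_nonneg x hx.le)
    have h2 : 0 ≤ (v * f x - E) * deriv φ x :=
      by nlinarith [sub_nonpos.mpr (hfE x hx.le), hφ'_nonpos x hx.le]
    exact mul_nonneg (add_nonneg h1 h2) (hρ x hx.le)
  have hsplit : (∫ x in Ioi (0:ℝ), F x)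
      = (∫ x in Ioi (0:ℝ),
          (v * deriv f x * φ x + (v * f x - E) * deriv φ x) * ρ x)
        + ∫ x in Ioi (0:ℝ), (f₂ x - f₁ x) * (v * f x - E) * φ₁ x * φ x := by
    exact MeasureTheory.integral_add hint2 hint1
  linarith [key, hpart2_nonneg, hsplit.symm]
end
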